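/- If λ is weakly inaccessible and K is μ-accessible for unboundedly many regular μ < λ, then K has no object of presentability rank λ. In particular, in a well μ-accessible category, the presentability rank of any object that is not μ-presentable is a successor cardinal. -/

import Mathlib

open CategoryTheory Limits Cardinal

universe u v u₂ v₂

/-- A preorder is `μ`-directed if every subset of cardinality `< μ` has an upper bound. -/
def IsCardDirected (μ : Cardinal.{v}) (J : Type v) [Preorder J] : Prop :=
  ∀ S : Set J, #S < μ → ∃ b, ∀ s ∈ S, s ≤ b

/-- An object is `μ`-presentable if its hom-functor preserves `μ`-directed colimits. -/
def IsPresentableObj (μ : Cardinal.{v}) {K : Type u} [Category.{v} K] (M : K) : Prop :=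
  ∀ (J : Type v) (_ : Preorder J), IsCardDirected μ J →
    Nonempty (PreservesColimitsOfShape J (coyoneda.obj (Opposite.op M)))

/-- `(<λ)`-presentable: `θ`-presentable for some regular `θ < max(λ, ℵ₁)`. -/
def IsLtPresentableObj (lam : Cardinal.{v}) {K : Type u} [Category.{v} K] (M : K) : Prop :=
  ∃ θ : Cardinal.{v}, θ.IsRegular ∧ θ < max lam (Cardinal.aleph 1) ∧ IsPresentableObj θ M

/-- `M` has presentability rank `lam`: the least regular cardinal at which `M` is presentable. -/
def HasPresRank (lam : Cardinal.{v}) {K : Type u} [Category.{v} K] (M : K) : Prop :=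
  lam.IsRegular ∧ IsPresentableObj lam M ∧
    ∀ ν : Cardinal.{v}, ν.IsRegular → IsPresentableObj ν M → lam ≤ ν

/-- `K` has all `μ`-directed colimits. -/
def HasMuDirectedColimits (μ : Cardinal.{v}) (K : Type u) [Category.{v} K] : Prop :=
  ∀ (J : Type v) (_ : Preorder J), IsCardDirected μ J → HasColimitsOfShape J K

/-- `(μ, <λ)`-accessibility of a category `K`. -/
def IsAccCat (μ lam : Cardinal.{v}) (K : Type u) [Category.{v} K] : Prop :=
  HasMuDirectedColimits μ K ∧
  (∃ S : Set K, Small.{v} S ∧ ∀ M : K, IsLtPresentableObj lam M → ∃ N ∈ S, Nonempty (M ≅ N)) ∧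
  (∀ M : K, ∃ (J : Type v) (_ : Preorder J) (D : J ⥤ K) (c : Cocone D),
     IsCardDirected μ J ∧ (∀ j, IsLtPresentableObj lam (D.obj j)) ∧
     Nonempty (IsColimit c) ∧ c.pt = M)


namespace Stmt13Aux


lemma isCardDirected_mono {θ θ' : Cardinal.{v}} {J : Type v} [Preorder J] (h : θ ≤ θ')
    (hd : IsCardDirected θ' J) : IsCardDirected θ J :=
  fun S hS => hd S (hS.trans_le h)

lemma isPresentableObj_mono {K : Type u} [Category.{v} K] {M : K} {θ θ' : Cardinal.{v}}
    (h : θ ≤ θ') (hm : IsPresentableObj θ M) : IsPresentableObj θ' M :=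
  fun J pre hd => hm J pre (isCardDirected_mono h hd)

lemma cd_nonempty {θ : Cardinal.{v}} {J : Type v} [Preorder J]
    (hθ : 0 < θ) (hd : IsCardDirected θ J) : Nonempty J := by
  obtain ⟨b, -⟩ := hd ∅ (by simpa using hθ)
  exact ⟨b⟩

lemma cd_isDirected {θ : Cardinal.{v}} {J : Type v} [Preorder J]
    (hθ : ℵ₀ ≤ θ) (hd : IsCardDirected θ J) : IsDirected J (· ≤ ·) := by
  constructor
  intro a b
  obtain ⟨c, hc⟩ := hd {a, b} (lt_of_lt_of_le (Set.toFinite _).lt_aleph0 hθ)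
  exact ⟨c, hc a (by simp), hc b (by simp)⟩

section Cat

variable {K : Type u} [Category.{v} K]

lemma factor_through {θ : Cardinal.{v}} (hθ : θ.IsRegular) {A : K} (hA : IsPresentableObj θ A)
    {J : Type v} [Preorder J] (hJ : IsCardDirected θ J) {D : J ⥤ K} {c : Cocone D}
    (hc : IsColimit c) (f : A ⟶ c.pt) : ∃ (j : J) (g : A ⟶ D.obj j), g ≫ c.ι.app j = f := by
  haveI := cd_nonempty hθ.pos hJ
  haveI := cd_isDirected hθ.aleph0_le hJ
  haveI := (hA J inferInstance hJ).some
  have hc' := isColimitOfPreserves (coyoneda.obj (Opposite.op A)) hc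
  obtain ⟨j, y, hy⟩ := Types.jointly_surjective _ hc' f
  exact ⟨j, y, hy⟩

lemma equalize {θ : Cardinal.{v}} (hθ : θ.IsRegular) {A : K} (hA : IsPresentableObj θ A)
    {J : Type v} [Preorder J] (hJ : IsCardDirected θ J) {D : J ⥤ K} {c : Cocone D}
    (hc : IsColimit c) {j : J} (g₁ g₂ : A ⟶ D.obj j)
    (h : g₁ ≫ c.ι.app j = g₂ ≫ c.ι.app j) :
    ∃ (k : J) (hk : j ≤ k), g₁ ≫ D.map hk.hom = g₂ ≫ D.map hk.hom := by
  haveI := cd_nonempty hθ.pos hJ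
  haveI := cd_isDirected hθ.aleph0_le hJ
  haveI := (hA J inferInstance hJ).some
  have hc' := isColimitOfPreserves (coyoneda.obj (Opposite.op A)) hc
  have := (Types.FilteredColimit.isColimit_eq_iff (D ⋙ coyoneda.obj (Opposite.op A)) hc'
    (xi := g₁) (xj := g₂)).1 h
  obtain ⟨k, f1, f2, hf⟩ := this
  refine ⟨k, leOfHom f1, ?_⟩
  have : f1 = f2 := Subsingleton.elim _ _
  subst this
  exact hf

lemma presentable_of_retract {θ : Cardinal.{v}} (hθ : θ.IsRegular) {M N : K}
    (s : M ⟶ N) (r : N ⟶ M) (hsr : s ≫ r = 𝟙 M) (hN : IsPresentableObj θ N) :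
    IsPresentableObj θ M := by
  intro J pre hJ
  haveI := cd_nonempty hθ.pos hJ
  haveI := cd_isDirected hθ.aleph0_le hJ
  refine ⟨⟨fun {D} => ⟨fun {c} hc => ?_⟩⟩⟩
  refine ⟨Types.FilteredColimit.isColimitOf _ _ ?_ ?_⟩
  · -- joint surjectivity
    intro f
    obtain ⟨j, g, hg⟩ := factor_through hθ hN hJ hc (r ≫ f)
    refine ⟨j, s ≫ g, ?_⟩
    dsimp
    rw [Category.assoc, hg, ← Category.assoc, hsr, Category.id_comp]
  · -- eventual equality
    intro i j xi xj hx
    obtain ⟨k, hik, hjk⟩ := directed_of (· ≤ ·) i j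
    have hx' : (xi ≫ D.map hik.hom) ≫ c.ι.app k = (xj ≫ D.map hjk.hom) ≫ c.ι.app k := by
      dsimp at hx
      simp only [Category.assoc, Cocone.w]
      exact hx
    have hre : (r ≫ xi ≫ D.map hik.hom) ≫ c.ι.app k
        = (r ≫ xj ≫ D.map hjk.hom) ≫ c.ι.app k := by
      simp only [Category.assoc] at hx' ⊢
      rw [hx']
    obtain ⟨l, hkl, hl⟩ := equalize hθ hN hJ hc _ _ hre
    refine ⟨l, (hik.trans hkl).hom, (hjk.trans hkl).hom, ?_⟩
    dsimp
    have hs := congrArg (fun t => s ≫ t) hl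
    simp only [← Category.assoc, hsr, Category.id_comp] at hs
    have e1 : D.map (hik.trans hkl).hom = D.map hik.hom ≫ D.map hkl.hom := by
      rw [← D.map_comp]; rfl
    have e2 : D.map (hjk.trans hkl).hom = D.map hjk.hom ≫ D.map hkl.hom := by
      rw [← D.map_comp]; rfl
    rw [e1, e2, ← Category.assoc, ← Category.assoc]
    simpa [Category.assoc] using hs

end Cat

section Threads

variable {K : Type u} [Category.{v} K] (M : K)
variable {W : Type v} [LinearOrder W]
variable {Jf : W → Type v} [∀ w, Preorder (Jf w)]
variable (Df : ∀ w, Jf w ⥤ K) (legf : ∀ w (q : Jf w), (Df w).obj q ⟶ M)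

structure CO where
  w : W
  q : Jf w
  m : (Df w).obj q ⟶ M
  tag : W ⊕ (Σ w : W, Jf w)

variable {M Df}

abbrev Ob (x : CO M Df) : K := (Df x.w).obj x.q

variable (M Df) in
def CHom (x y : CO M Df) : Type v := {f : Ob x ⟶ Ob y // f ≫ y.m = x.m}

variable (M Df) (lam : Cardinal.{v})

structure Th where
  rk : W
  BO : Set (CO M Df)
  BA : Set ((a : CO M Df) × (b : CO M Df) × CHom M Df a b)
  z : CO M Df
  eps : ∀ a ∈ BO, CHom M Df a z
  hBO : #BO < lam
  hBA : #BA < lam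
  hzBO : z ∉ BO
  hsrc : ∀ e ∈ BA, e.1 ∈ BO
  htgt : ∀ e ∈ BA, e.2.1 ∈ BO
  hnat : ∀ e (he : e ∈ BA), e.2.2.1 ≫ (eps e.2.1 (htgt e he)).1 = (eps e.1 (hsrc e he)).1

variable {M Df lam}

def egraph (t : Th M Df lam) : Set ((a : CO M Df) × (b : CO M Df) × CHom M Df a b) :=
  {e | ∃ (a : CO M Df) (ha : a ∈ t.BO), e = ⟨a, t.z, t.eps a ha⟩}

instance : Preorder (Th M Df lam) where
  le t t' := t = t' ∨
    (t.rk < t'.rk ∧ t.BO ∪ {t.z} ⊆ t'.BO ∧ t.BA ∪ egraph t ⊆ t'.BA)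
  le_refl t := Or.inl rfl
  le_trans t t' t'' h h' := by
    rcases h with rfl | ⟨h1, h2, h3⟩
    · exact h'
    rcases h' with rfl | ⟨h1', h2', h3'⟩
    · exact Or.inr ⟨h1, h2, h3⟩
    · exact Or.inr ⟨h1.trans h1', fun x hx => h2' (Or.inl (h2 hx)),
        fun e he => h3' (Or.inl (h3 he))⟩

lemma strict_of_le_ne {t t' : Th M Df lam} (h : t ≤ t') (hne : t ≠ t') :
    t.rk < t'.rk ∧ t.BO ∪ {t.z} ⊆ t'.BO ∧ t.BA ∪ egraph t ⊆ t'.BA :=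
  (h : t = t' ∨ _).resolve_left hne

lemma z_mem_of_lt {t t' : Th M Df lam} (h : t ≤ t') (hne : t ≠ t') : t.z ∈ t'.BO :=
  (strict_of_le_ne h hne).2.1 (Or.inr rfl)

lemma ne_of_lt_rk {t t' : Th M Df lam} (h : t.rk < t'.rk) : t ≠ t' := by
  intro he; rw [he] at h; exact lt_irrefl _ h

open Classical in
noncomputable def ThG : Th M Df lam ⥤ K where
  obj t := Ob t.z
  map {t t'} f :=
    if h : t = t' then eqToHom (by rw [h]) else (t'.eps t.z (z_mem_of_lt (leOfHom f) h)).1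
  map_id t := by simp
  map_comp {t t' t''} f g := by
    by_cases h1 : t = t'
    · subst h1
      by_cases h2 : t = t''
      · subst h2; simp
      · simp [h2]
    · by_cases h2 : t' = t''
      · subst h2; simp [h1]
      · have h3 : t ≠ t'' := by
          have r1 := (strict_of_le_ne (leOfHom f) h1).1
          have r2 := (strict_of_le_ne (leOfHom g) h2).1
          exact ne_of_lt_rk (r1.trans r2)
        simp only [dif_neg h1, dif_neg h2, dif_neg h3]
        have hmem : (⟨t.z, t'.z, t'.eps t.z (z_mem_of_lt (leOfHom f) h1)⟩ :
            (a : CO M Df) × (b : CO M Df) × CHom M Df a b) ∈ t''.BA :=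
          (strict_of_le_ne (leOfHom g) h2).2.2 (Or.inr ⟨t.z, z_mem_of_lt (leOfHom f) h1, rfl⟩)
        exact (t''.hnat _ hmem).symm

noncomputable def ThCocone : Cocone (ThG (M := M) (Df := Df) (lam := lam)) where
  pt := M
  ι := {
    app := fun t => t.z.m
    naturality := fun t t' f => by
      dsimp [ThG]
      by_cases h : t = t'
      · subst h; simp
      · rw [dif_neg h, Category.comp_id]
        exact (t'.eps t.z (z_mem_of_lt (leOfHom f) h)).2 }

def MCocone (hleg : ∀ w ⦃q q'⦄ (h : q ⟶ q'), (Df w).map h ≫ legf w q' = legf w q)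
    (w : W) : Cocone (Df w) where
  pt := M
  ι := { app := legf w
         naturality := fun q q' h => by simpa using hleg w h }

open Classical in
/-- Extend a partial cocone function by one new object. -/
noncomputable def consEps {B : Set (CO M Df)} {x zz : CO M Df} (hx : x ∉ B)
    (eps0 : ∀ a ∈ B, CHom M Df a zz) (Fx : CHom M Df x zz) :
    ∀ a ∈ B ∪ {x}, CHom M Df a zz :=
  fun a ha =>
    if h : a ∈ B then eps0 a h
    else (Set.eq_of_mem_singleton (ha.resolve_left h)) ▸ Fx

lemma consEps_mem {B : Set (CO M Df)} {x zz : CO M Df} (hx : x ∉ B)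
    (eps0 : ∀ a ∈ B, CHom M Df a zz) (Fx : CHom M Df x zz) {a : CO M Df} (ha : a ∈ B) :
    consEps hx eps0 Fx a (Or.inl ha) = eps0 a ha := by
  unfold consEps
  rw [dif_pos ha]

lemma consEps_last {B : Set (CO M Df)} {x zz : CO M Df} (hx : x ∉ B)
    (eps0 : ∀ a ∈ B, CHom M Df a zz) (Fx : CHom M Df x zz) :
    consEps hx eps0 Fx x (Or.inr rfl) = Fx := by
  unfold consEps
  rw [dif_neg hx]

/-- Compose a partial cocone function with a morphism out of its apex, extending it to the
apex. -/
noncomputable def pushEps {t : Th M Df lam} {z' : CO M Df} (g : CHom M Df t.z z') :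
    ∀ a ∈ t.BO ∪ {t.z}, CHom M Df a z' :=
  consEps t.hzBO
    (fun a ha => ⟨(t.eps a ha).1 ≫ g.1, by rw [Category.assoc, g.2, (t.eps a ha).2]⟩) g

lemma pushEps_mem {t : Th M Df lam} {z' : CO M Df} (g : CHom M Df t.z z') {a : CO M Df}
    (ha : a ∈ t.BO) : (pushEps g a (Or.inl ha)).1 = (t.eps a ha).1 ≫ g.1 := by
  exact congrArg Subtype.val (consEps_mem _ _ g ha)

lemma pushEps_last {t : Th M Df lam} {z' : CO M Df} (g : CHom M Df t.z z') :
    pushEps g t.z (Or.inr rfl) = g := by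
  exact consEps_last _ _ g


lemma mk_egraph_le (t : Th M Df lam) : #(egraph t) ≤ #t.BO := by
  have : egraph t = Set.range (fun p : t.BO => (⟨p.1, t.z, t.eps p.1 p.2⟩ :
      (a : CO M Df) × (b : CO M Df) × CHom M Df a b)) := by
    ext e
    constructor
    · rintro ⟨a, ha, rfl⟩; exact ⟨⟨a, ha⟩, rfl⟩
    · rintro ⟨⟨a, ha⟩, rfl⟩; exact ⟨a, ha, rfl⟩
  rw [this]
  simpa using mk_range_le

/-- Leaf threads. -/
def leafTh (h0 : (0 : Cardinal.{v}) < lam) (w : W) (q : Jf w) : Th M Df lam where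
  rk := w
  BO := ∅
  BA := ∅
  z := ⟨w, q, legf w q, Sum.inr ⟨w, q⟩⟩
  eps := fun a ha => absurd ha (Set.notMem_empty a)
  hBO := by simpa using h0
  hBA := by simpa using h0
  hzBO := Set.notMem_empty _
  hsrc := fun e he => absurd he (Set.notMem_empty e)
  htgt := fun e he => absurd he (Set.notMem_empty e)
  hnat := fun e he => absurd he (Set.notMem_empty e)

lemma cocone_rel (s : Cocone (ThG (M := M) (Df := Df) (lam := lam))) {t t' : Th M Df lam}
    (h : t ≤ t') (hne : t ≠ t') :
    s.ι.app t = (t'.eps t.z (z_mem_of_lt h hne)).1 ≫ s.ι.app t' := by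
  have hnat := s.ι.naturality (homOfLE h)
  dsimp [ThG] at hnat
  rw [dif_neg hne, Category.comp_id] at hnat
  exact hnat.symm

/-- First projection of a tag. -/
def tagproj (x : CO M Df) : W :=
  match x.tag with
  | Sum.inl w => w
  | Sum.inr p => p.1

theorem th_directed
    (hreg : lam.IsRegular)
    (hsucc : ∀ c < lam, Order.succ c < lam)
    (hleg : ∀ w ⦃q q'⦄ (h : q ⟶ q'), (Df w).map h ≫ legf w q' = legf w q)
    (hcolim : ∀ w, IsColimit (MCocone legf hleg w))
    (μf : W → Cardinal.{v})
    (hμreg : ∀ w, (μf w).IsRegular)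
    (hμlt : ∀ w, μf w < lam)
    (hdir : ∀ w, IsCardDirected (μf w) (Jf w))
    (hpres : ∀ w q, ∃ θ : Cardinal.{v}, θ.IsRegular ∧ θ ≤ μf w ∧
      IsPresentableObj θ ((Df w).obj q))
    (havoid : ∀ β < lam, ∀ bad : Set W, #bad < lam → ∃ w, w ∉ bad ∧ β ≤ μf w)
    (hWbound : ∀ Sw : Set W, #Sw < lam → ∃ b, ∀ s ∈ Sw, s < b) :
    IsCardDirected lam (Th M Df lam) := by
  intro S hS
  classical
  choose lvl hlvlreg hlvlle hlvlpres using hpres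
  have hao : ℵ₀ ≤ lam := hreg.aleph0_le
  set TotO : Set (CO M Df) := ⋃ t ∈ S, (t.BO ∪ {t.z}) with hTotO
  set TotA : Set ((a : CO M Df) × (b : CO M Df) × CHom M Df a b) :=
    ⋃ t ∈ S, (t.BA ∪ egraph t) with hTotA
  have hTotOlt : #TotO < lam := by
    refine lt_of_le_of_lt (mk_biUnion_le _ _) (mul_lt_of_lt hao hS ?_)
    refine iSup_lt_of_isRegular hreg hS ?_
    intro t
    refine lt_of_le_of_lt (mk_union_le _ _) (add_lt_of_lt hao t.1.hBO ?_)
    simpa using one_lt_aleph0.trans_le hao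
  have hTotAlt : #TotA < lam := by
    refine lt_of_le_of_lt (mk_biUnion_le _ _) (mul_lt_of_lt hao hS ?_)
    refine iSup_lt_of_isRegular hreg hS ?_
    intro t
    refine lt_of_le_of_lt (mk_union_le _ _) (add_lt_of_lt hao t.1.hBA ?_)
    exact lt_of_le_of_lt (mk_egraph_le t.1) t.1.hBO
  have hsrcT : ∀ e ∈ TotA, e.1 ∈ TotO := by
    intro e he
    rw [hTotA] at he
    obtain ⟨t, ht, he⟩ := Set.mem_iUnion₂.1 he
    rcases he with he | ⟨a, ha, rfl⟩
    · exact Set.mem_iUnion₂.2 ⟨t, ht, Or.inl (t.hsrc e he)⟩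
    · exact Set.mem_iUnion₂.2 ⟨t, ht, Or.inl ha⟩
  have htgtT : ∀ e ∈ TotA, e.2.1 ∈ TotO := by
    intro e he
    rw [hTotA] at he
    obtain ⟨t, ht, he⟩ := Set.mem_iUnion₂.1 he
    rcases he with he | ⟨a, ha, rfl⟩
    · exact Set.mem_iUnion₂.2 ⟨t, ht, Or.inl (t.htgt e he)⟩
    · exact Set.mem_iUnion₂.2 ⟨t, ht, Or.inr rfl⟩
  -- choose a high enough level
  have hsuplt : (⨆ x : TotO, lvl x.1.w x.1.q) < lam :=
    iSup_lt_of_isRegular hreg hTotOlt fun x =>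
      lt_of_le_of_lt (hlvlle x.1.w x.1.q) (hμlt x.1.w)
  set β : Cardinal.{v} := Order.succ ((#TotO + #TotA) + (⨆ x : TotO, lvl x.1.w x.1.q))
    with hβdef
  have hβlt : β < lam :=
    hsucc _ (add_lt_of_lt hao (add_lt_of_lt hao hTotOlt hTotAlt) hsuplt)
  obtain ⟨wB, -, hwB⟩ := havoid β hβlt ∅ (by simpa using aleph0_pos.trans_le hao)
  have hμB : (μf wB).IsRegular := hμreg wB
  have hTotOμ : #TotO < μf wB := by
    refine lt_of_lt_of_le ?_ hwB
    exact lt_of_le_of_lt (le_self_add.trans le_self_add) (Order.lt_succ _)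
  have hTotAμ : #TotA < μf wB := by
    refine lt_of_lt_of_le ?_ hwB
    exact lt_of_le_of_lt (le_add_self.trans le_self_add) (Order.lt_succ _)
  have hlvlμ : ∀ x : TotO, lvl x.1.w x.1.q ≤ μf wB := by
    intro x
    refine le_trans ?_ ((Order.le_succ _).trans hwB)
    exact le_trans (le_ciSup (Cardinal.bddAbove_range _) x) le_add_self
  -- factor each object of TotO through the level-wB diagram
  have hfac : ∀ x : TotO, ∃ (j : Jf wB) (g : Ob x.1 ⟶ (Df wB).obj j),
      g ≫ legf wB j = x.1.m := by
    intro x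
    exact factor_through (hlvlreg x.1.w x.1.q) (hlvlpres x.1.w x.1.q)
      (isCardDirected_mono (hlvlμ x) (hdir wB)) (hcolim wB) x.1.m
  choose jx gx hgx using hfac
  -- bound the stages
  obtain ⟨q1, hq1⟩ := hdir wB (Set.range jx) (lt_of_le_of_lt mk_range_le hTotOμ)
  have hq1' : ∀ x : TotO, jx x ≤ q1 := fun x => hq1 _ ⟨x, rfl⟩
  -- push to stage q1
  set g' : ∀ x : TotO, Ob x.1 ⟶ (Df wB).obj q1 :=
    fun x => gx x ≫ (Df wB).map (hq1' x).hom with hg'def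
  have hg'm : ∀ x : TotO, g' x ≫ legf wB q1 = x.1.m := by
    intro x
    rw [hg'def]
    simp only [Category.assoc, hleg wB (hq1' x).hom]
    exact hgx x
  -- equalize the arrows
  have heq : ∀ e : TotA, ∃ (k : Jf wB) (hk : q1 ≤ k),
      (e.1.2.2.1 ≫ g' ⟨e.1.2.1, htgtT e.1 e.2⟩) ≫ (Df wB).map hk.hom
        = g' ⟨e.1.1, hsrcT e.1 e.2⟩ ≫ (Df wB).map hk.hom := by
    intro e
    refine equalize (hlvlreg e.1.1.w e.1.1.q) (hlvlpres e.1.1.w e.1.1.q)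
      (isCardDirected_mono (hlvlμ ⟨e.1.1, hsrcT e.1 e.2⟩) (hdir wB)) (hcolim wB) _ _ ?_
    show _ ≫ legf wB q1 = _ ≫ legf wB q1
    rw [Category.assoc, hg'm ⟨e.1.2.1, htgtT e.1 e.2⟩, hg'm ⟨e.1.1, hsrcT e.1 e.2⟩]
    exact e.1.2.2.2
  choose ke hke hkeq using heq
  have hinslt : #(insert q1 (Set.range ke) : Set (Jf wB)) < μf wB := by
    refine lt_of_le_of_lt mk_insert_le ?_
    exact add_lt_of_lt hμB.aleph0_le (lt_of_le_of_lt mk_range_le hTotAμ)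
      (one_lt_aleph0.trans_le hμB.aleph0_le)
  obtain ⟨q2, hq2⟩ := hdir wB (insert q1 (Set.range ke)) hinslt
  have hq1q2 : q1 ≤ q2 := hq2 _ (Set.mem_insert _ _)
  -- final maps
  set gf : ∀ x : TotO, Ob x.1 ⟶ (Df wB).obj q2 :=
    fun x => g' x ≫ (Df wB).map hq1q2.hom with hgfdef
  have hgfm : ∀ x : TotO, gf x ≫ legf wB q2 = x.1.m := by
    intro x
    rw [hgfdef]
    simp only [Category.assoc, hleg wB hq1q2.hom]
    exact hg'm x
  have hgfeq : ∀ e : TotA,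
      e.1.2.2.1 ≫ gf ⟨e.1.2.1, htgtT e.1 e.2⟩ = gf ⟨e.1.1, hsrcT e.1 e.2⟩ := by
    intro e
    have h2 : ke e ≤ q2 := hq2 _ (Set.mem_insert_of_mem _ ⟨e, rfl⟩)
    have hsplit : (Df wB).map hq1q2.hom
        = (Df wB).map (hke e).hom ≫ (Df wB).map h2.hom := by
      rw [← Functor.map_comp]
      congr 1
    have h3 := hkeq e
    rw [hgfdef]
    dsimp only
    rw [hsplit]
    simp only [← Category.assoc]
    simp only [← Category.assoc] at h3
    rw [h3]
  -- fresh tag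
  obtain ⟨w0, hw0, -⟩ := havoid 0 (aleph0_pos.trans_le hao)
    (Sum.inl ⁻¹' (CO.tag '' TotO))
    (lt_of_le_of_lt (le_trans (mk_preimage_of_injective _ _ Sum.inl_injective)
      mk_image_le) hTotOlt)
  -- rank bound
  obtain ⟨rkB, hrkB⟩ := hWbound (Th.rk '' S) (lt_of_le_of_lt mk_image_le hS)
  -- the new top
  set zB : CO M Df := ⟨wB, q2, legf wB q2, Sum.inl w0⟩ with hzBdef
  have hzBnotin : zB ∉ TotO := by
    intro hz
    exact hw0 ⟨zB, hz, rfl⟩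
  set tB : Th M Df lam :=
    { rk := rkB
      BO := TotO
      BA := TotA
      z := zB
      eps := fun a ha => ⟨gf ⟨a, ha⟩, hgfm ⟨a, ha⟩⟩
      hBO := hTotOlt
      hBA := hTotAlt
      hzBO := hzBnotin
      hsrc := hsrcT
      htgt := htgtT
      hnat := fun e he => hgfeq ⟨e, he⟩ } with htBdef
  refine ⟨tB, ?_⟩
  intro t ht
  refine Or.inr ⟨hrkB _ ⟨t, ht, rfl⟩, ?_, ?_⟩
  · intro x hx
    exact Set.mem_iUnion₂.2 ⟨t, ht, hx⟩
  · intro e he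
    exact Set.mem_iUnion₂.2 ⟨t, ht, he⟩



section IsCol

/-- Lemma A : values of a cocone on leaf threads are compatible with all morphisms over `M`. -/
theorem leaf_compat (hWbound : ∀ Sw : Set W, #Sw < lam → ∃ b, ∀ s ∈ Sw, s < b)
    (s : Cocone (ThG (M := M) (Df := Df) (lam := lam)))
    (h0 : (0 : Cardinal.{v}) < lam) (hao : ℵ₀ ≤ lam)
    {w : W} {q : Jf w} {w' : W} {q' : Jf w'}
    (hne : (⟨w, q⟩ : Σ w, Jf w) ≠ ⟨w', q'⟩)
    (f : (Df w).obj q ⟶ (Df w').obj q') (hf : f ≫ legf w' q' = legf w q) :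
    s.ι.app (leafTh legf h0 w q) = f ≫ s.ι.app (leafTh legf h0 w' q') := by
  classical
  set x1 : CO M Df := ⟨w, q, legf w q, Sum.inr ⟨w, q⟩⟩ with hx1
  set x2 : CO M Df := ⟨w', q', legf w' q', Sum.inr ⟨w', q'⟩⟩ with hx2
  have hx12 : x1 ∉ ((∅ : Set (CO M Df)) ∪ {x2}) := by
    rintro (h | h)
    · exact h
    · exact hne (Sum.inr_injective (congrArg CO.tag (Set.eq_of_mem_singleton h)))
  obtain ⟨rkT, hrkT⟩ := hWbound {w, w'} ((Set.toFinite _).lt_aleph0.trans_le hao)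
  set zz : CO M Df := ⟨w', q', legf w' q', Sum.inl w⟩ with hzz
  have hzBO : zz ∉ ((∅ : Set (CO M Df)) ∪ {x2}) ∪ {x1} := by
    rintro ((h | h) | h)
    · exact h
    · exact Sum.inl_ne_inr (congrArg CO.tag (Set.eq_of_mem_singleton h))
    · exact Sum.inl_ne_inr (congrArg CO.tag (Set.eq_of_mem_singleton h))
  set F2 : CHom M Df x2 zz := ⟨𝟙 _, Category.id_comp _⟩ with hF2
  set F1 : CHom M Df x1 zz := ⟨f, hf⟩ with hF1
  have hx2e : x2 ∉ (∅ : Set (CO M Df)) := Set.notMem_empty _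
  set t2 : Th M Df lam :=
    { rk := rkT
      BO := ((∅ : Set (CO M Df)) ∪ {x2}) ∪ {x1}
      BA := ∅
      z := zz
      eps := consEps hx12 (consEps hx2e (fun a ha => absurd ha (Set.notMem_empty a)) F2) F1
      hBO := (Set.toFinite _).lt_aleph0.trans_le hao
      hBA := by simpa using h0
      hzBO := hzBO
      hsrc := fun e he => absurd he (Set.notMem_empty e)
      htgt := fun e he => absurd he (Set.notMem_empty e)
      hnat := fun e he => absurd he (Set.notMem_empty e) } with ht2
  have hle1 : leafTh legf h0 w q ≤ t2 := by
    refine Or.inr ⟨hrkT w (by simp), ?_, ?_⟩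
    · rintro a (ha | ha)
      · exact absurd ha (Set.notMem_empty a)
      · exact Or.inr ha
    · rintro e (he | he)
      · exact absurd he (Set.notMem_empty e)
      · obtain ⟨a, ha, -⟩ := he
        exact absurd ha (Set.notMem_empty a)
  have hle2 : leafTh legf h0 w' q' ≤ t2 := by
    refine Or.inr ⟨hrkT w' (by simp), ?_, ?_⟩
    · rintro a (ha | ha)
      · exact absurd ha (Set.notMem_empty a)
      · exact Or.inl (Or.inr ha)
    · rintro e (he | he)
      · exact absurd he (Set.notMem_empty e)
      · obtain ⟨a, ha, -⟩ := he
        exact absurd ha (Set.notMem_empty a)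
  have hne1 : leafTh legf h0 w q ≠ t2 := ne_of_lt_rk (hrkT w (by simp))
  have hne2 : leafTh legf h0 w' q' ≠ t2 := ne_of_lt_rk (hrkT w' (by simp))
  have e1 := cocone_rel s hle1 hne1
  have e2 := cocone_rel s hle2 hne2
  have hev1 : t2.eps (leafTh legf h0 w q).z (z_mem_of_lt hle1 hne1) = F1 :=
    consEps_last hx12 _ F1
  have hev2 : t2.eps (leafTh legf h0 w' q').z (z_mem_of_lt hle2 hne2) = F2 := by
    have h' : t2.eps (leafTh legf h0 w' q').z (z_mem_of_lt hle2 hne2)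
        = consEps hx2e (fun a ha => absurd ha (Set.notMem_empty a)) F2 x2 (Or.inr rfl) :=
      consEps_mem hx12 _ F1 (Or.inr rfl)
    rw [h', consEps_last]
  rw [e1, e2, hev1, hev2, hF1, hF2]
  exact congrArg (fun h => f ≫ h) (Category.id_comp (s.ι.app t2)).symm

open Classical in
/-- The cocone used to define the descending morphism. -/
noncomputable def descC
    (hleg : ∀ w ⦃q q'⦄ (h : q ⟶ q'), (Df w).map h ≫ legf w q' = legf w q)
    (hWbound : ∀ Sw : Set W, #Sw < lam → ∃ b, ∀ s ∈ Sw, s < b)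
    (h0 : (0 : Cardinal.{v}) < lam) (hao : ℵ₀ ≤ lam)
    (s : Cocone (ThG (M := M) (Df := Df) (lam := lam))) (w : W) : Cocone (Df w) where
  pt := s.pt
  ι := {
    app := fun q => s.ι.app (leafTh legf h0 w q)
    naturality := fun q q' h => by
      by_cases hq : q = q'
      · subst hq
        have : h = 𝟙 q := Subsingleton.elim _ _
        rw [this]
        simp
        exact (Category.id_comp (s.ι.app (leafTh legf h0 w q))).trans
          (Category.comp_id (s.ι.app (leafTh legf h0 w q))).symm
      · dsimp
        refine Eq.trans ?_ (Category.comp_id _).symm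
        refine (leaf_compat (legf := legf) hWbound s h0 hao ?_ ((Df w).map h) (hleg w h)).symm
        intro hh
        simp only [Sigma.mk.inj_iff] at hh
        exact hq (eq_of_heq hh.2) }

theorem thCocone_isColimit
    (hreg : lam.IsRegular)
    (hleg : ∀ w ⦃q q'⦄ (h : q ⟶ q'), (Df w).map h ≫ legf w q' = legf w q)
    (hcolim : ∀ w, IsColimit (MCocone legf hleg w))
    (μf : W → Cardinal.{v})
    (hμlt : ∀ w, μf w < lam)
    (hdir : ∀ w, IsCardDirected (μf w) (Jf w))
    (hpres : ∀ w q, ∃ θ : Cardinal.{v}, θ.IsRegular ∧ θ ≤ μf w ∧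
      IsPresentableObj θ ((Df w).obj q))
    (havoid : ∀ β < lam, ∀ bad : Set W, #bad < lam → ∃ w, w ∉ bad ∧ β ≤ μf w)
    (hWbound : ∀ Sw : Set W, #Sw < lam → ∃ b, ∀ s ∈ Sw, s < b) :
    Nonempty (IsColimit (ThCocone (M := M) (Df := Df) (lam := lam))) := by
  classical
  choose lvl hlvlreg hlvlle hlvlpres using hpres
  have hao : ℵ₀ ≤ lam := hreg.aleph0_le
  have h0 : (0 : Cardinal.{v}) < lam := aleph0_pos.trans_le hao
  obtain ⟨w₀, -, -⟩ := havoid 0 h0 ∅ (by simpa using h0)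
  -- the descending morphisms
  set uu : ∀ (s : Cocone (ThG (M := M) (Df := Df) (lam := lam))) (w : W), (M ⟶ s.pt) :=
    fun s w => (hcolim w).desc (descC (legf := legf) hleg hWbound h0 hao s w) with huu
  have uufac : ∀ s w q, legf w q ≫ uu s w = s.ι.app (leafTh legf h0 w q) :=
    fun s w q => (hcolim w).fac (descC (legf := legf) hleg hWbound h0 hao s w) q
  -- descents agree across levels
  have same_desc : ∀ s (w w' : W), w ≠ w' → μf w ≤ μf w' → uu s w' = uu s w := by
    intro s w w' hne hle
    refine (hcolim w).hom_ext (fun q => ?_)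
    show legf w q ≫ uu s w' = legf w q ≫ uu s w
    rw [uufac]
    obtain ⟨q', g, hg⟩ := factor_through (hlvlreg w q) (hlvlpres w q)
      (isCardDirected_mono ((hlvlle w q).trans hle) (hdir w')) (hcolim w') (legf w q)
    have hg' : g ≫ legf w' q' = legf w q := hg
    rw [← hg', Category.assoc, uufac]
    refine (leaf_compat (legf := legf) hWbound s h0 hao ?_ g hg').symm
    intro hh
    exact hne (congrArg Sigma.fst hh)
  -- the factorization property
  have facmain : ∀ s (t : Th M Df lam), t.z.m ≫ uu s w₀ = s.ι.app t := by
    intro s t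
    -- (a) re-top the thread with a fresh tag
    have hBOul : #(t.BO ∪ {t.z} : Set (CO M Df)) < lam := by
      refine lt_of_le_of_lt (mk_union_le _ _) (add_lt_of_lt hao t.hBO ?_)
      simpa using one_lt_aleph0.trans_le hao
    obtain ⟨rk1, hrk1⟩ := hWbound {t.rk} ((Set.toFinite _).lt_aleph0.trans_le hao)
    obtain ⟨wf, hwf, -⟩ := havoid 0 h0 (tagproj '' (t.BO ∪ {t.z}))
      (lt_of_le_of_lt mk_image_le hBOul)
    set z1 : CO M Df := ⟨t.z.w, t.z.q, t.z.m, Sum.inl wf⟩ with hz1def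
    have hz1 : z1 ∉ t.BO ∪ {t.z} := fun h => hwf ⟨z1, h, rfl⟩
    set g1 : CHom M Df t.z z1 := ⟨𝟙 _, Category.id_comp _⟩ with hg1def
    set t1 : Th M Df lam :=
      { rk := rk1
        BO := t.BO ∪ {t.z}
        BA := t.BA ∪ egraph t
        z := z1
        eps := pushEps g1
        hBO := hBOul
        hBA := by
          refine lt_of_le_of_lt (mk_union_le _ _) (add_lt_of_lt hao t.hBA ?_)
          exact lt_of_le_of_lt (mk_egraph_le t) t.hBO
        hzBO := hz1
        hsrc := fun e he => by
          rcases he with he | he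
          · exact Or.inl (t.hsrc e he)
          · obtain ⟨a, ha, rfl⟩ := he
            exact Or.inl ha
        htgt := fun e he => by
          rcases he with he | he
          · exact Or.inl (t.htgt e he)
          · obtain ⟨a, ha, rfl⟩ := he
            exact Or.inr rfl
        hnat := fun e he => by
          rcases he with he | he
          · rw [pushEps_mem g1 (t.htgt e he), pushEps_mem g1 (t.hsrc e he),
              ← Category.assoc, t.hnat e he]
          · obtain ⟨a, ha, rfl⟩ := he
            rw [pushEps_mem g1 ha, congrArg Subtype.val (pushEps_last g1)] } with ht1
    have hle1 : t ≤ t1 := Or.inr ⟨hrk1 t.rk rfl, subset_refl _, subset_refl _⟩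
    have hne1 : t ≠ t1 := ne_of_lt_rk (hrk1 t.rk rfl)
    have hval1 : (t1.eps t.z (z_mem_of_lt hle1 hne1)).1 = 𝟙 (Ob t.z) :=
      congrArg Subtype.val (pushEps_last g1)
    have estep1 : s.ι.app t = s.ι.app t1 := by
      rw [cocone_rel s hle1 hne1, hval1]
      exact Category.id_comp _
    -- (b) choose a high level avoiding all tags involved
    have hBOul1 : #(t1.BO ∪ {t1.z} : Set (CO M Df)) < lam := by
      refine lt_of_le_of_lt (mk_union_le _ _) (add_lt_of_lt hao hBOul ?_)
      simpa using one_lt_aleph0.trans_le hao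
    set bad2 : Set W := insert w₀ (tagproj '' (t1.BO ∪ {t1.z})) with hbad2def
    have hbad2 : #bad2 < lam := by
      refine lt_of_le_of_lt mk_insert_le (add_lt_of_lt hao
        (lt_of_le_of_lt mk_image_le hBOul1) ?_)
      simpa using one_lt_aleph0.trans_le hao
    obtain ⟨w', hw', hβw'⟩ := havoid (max (μf w₀) (lvl t.z.w t.z.q))
      (max_lt (hμlt w₀) (lt_of_le_of_lt (hlvlle _ _) (hμlt _))) bad2 hbad2
    have hww' : w₀ ≠ w' := fun h => hw' (h ▸ Set.mem_insert _ _)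
    -- (c) factor the map to M through level w'
    obtain ⟨qt, g, hg⟩ := factor_through (hlvlreg t.z.w t.z.q) (hlvlpres t.z.w t.z.q)
      (isCardDirected_mono ((le_max_right (μf w₀) (lvl t.z.w t.z.q)).trans hβw')
        (hdir w')) (hcolim w') t.z.m
    have hg' : g ≫ legf w' qt = t.z.m := hg
    -- (d) the leaf at the factoring stage
    set xq : CO M Df := ⟨w', qt, legf w' qt, Sum.inr ⟨w', qt⟩⟩ with hxqdef
    have hxq : xq ∉ t1.BO ∪ {t1.z} :=
      fun h => hw' (Set.mem_insert_of_mem _ ⟨xq, h, rfl⟩)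
    -- (e) a fresh top above everything
    have hBOul2 : #((t1.BO ∪ {t1.z}) ∪ {xq} : Set (CO M Df)) < lam := by
      refine lt_of_le_of_lt (mk_union_le _ _) (add_lt_of_lt hao hBOul1 ?_)
      simpa using one_lt_aleph0.trans_le hao
    obtain ⟨wf2, hwf2, -⟩ := havoid 0 h0 (tagproj '' ((t1.BO ∪ {t1.z}) ∪ {xq}))
      (lt_of_le_of_lt mk_image_le hBOul2)
    set z2 : CO M Df := ⟨w', qt, legf w' qt, Sum.inl wf2⟩ with hz2def
    have hz2 : z2 ∉ (t1.BO ∪ {t1.z}) ∪ {xq} := fun h => hwf2 ⟨z2, h, rfl⟩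
    set g2 : CHom M Df t1.z z2 := ⟨g, hg'⟩ with hg2def
    set F3 : CHom M Df xq z2 := ⟨𝟙 _, Category.id_comp _⟩ with hF3def
    obtain ⟨rk2, hrk2⟩ := hWbound {t1.rk, w'} ((Set.toFinite _).lt_aleph0.trans_le hao)
    set t3 : Th M Df lam :=
      { rk := rk2
        BO := (t1.BO ∪ {t1.z}) ∪ {xq}
        BA := t1.BA ∪ egraph t1
        z := z2
        eps := consEps hxq (pushEps g2) F3
        hBO := hBOul2
        hBA := by
          refine lt_of_le_of_lt (mk_union_le _ _) (add_lt_of_lt hao t1.hBA ?_)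
          exact lt_of_le_of_lt (mk_egraph_le t1) t1.hBO
        hzBO := hz2
        hsrc := fun e he => by
          rcases he with he | he
          · exact Or.inl (Or.inl (t1.hsrc e he))
          · obtain ⟨a, ha, rfl⟩ := he
            exact Or.inl (Or.inl ha)
        htgt := fun e he => by
          rcases he with he | he
          · exact Or.inl (Or.inl (t1.htgt e he))
          · obtain ⟨a, ha, rfl⟩ := he
            exact Or.inl (Or.inr rfl)
        hnat := fun e he => by
          rcases he with he | he
          · rw [consEps_mem hxq (pushEps g2) F3 (Or.inl (t1.htgt e he)),
              consEps_mem hxq (pushEps g2) F3 (Or.inl (t1.hsrc e he)),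
              pushEps_mem g2 (t1.htgt e he), pushEps_mem g2 (t1.hsrc e he),
              ← Category.assoc, t1.hnat e he]
          · obtain ⟨a, ha, rfl⟩ := he
            rw [consEps_mem hxq (pushEps g2) F3 (Or.inr rfl),
              consEps_mem hxq (pushEps g2) F3 (Or.inl ha),
              pushEps_mem g2 ha, congrArg Subtype.val (pushEps_last g2)] } with ht3
    have hle3 : t1 ≤ t3 := Or.inr ⟨hrk2 t1.rk (by simp), fun x hx => Or.inl hx,
      subset_refl _⟩
    have hne3 : t1 ≠ t3 := ne_of_lt_rk (hrk2 t1.rk (by simp))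
    have hleL : leafTh legf h0 w' qt ≤ t3 := by
      refine Or.inr ⟨hrk2 w' (by simp), ?_, ?_⟩
      · rintro a (ha | ha)
        · exact absurd ha (Set.notMem_empty a)
        · exact Or.inr ha
      · rintro e (he | he)
        · exact absurd he (Set.notMem_empty e)
        · obtain ⟨a, ha, -⟩ := he
          exact absurd ha (Set.notMem_empty a)
    have hneL : leafTh legf h0 w' qt ≠ t3 := ne_of_lt_rk (hrk2 w' (by simp))
    have hval3 : (t3.eps t1.z (z_mem_of_lt hle3 hne3)).1 = g := by
      have h1 : t3.eps t1.z (z_mem_of_lt hle3 hne3) = pushEps g2 t1.z (Or.inr rfl) :=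
        consEps_mem hxq (pushEps g2) F3 (Or.inr rfl)
      rw [h1, pushEps_last]
    have hvalL : (t3.eps (leafTh legf h0 w' qt).z (z_mem_of_lt hleL hneL)).1
        = 𝟙 (Ob xq) := by
      have h1 : t3.eps (leafTh legf h0 w' qt).z (z_mem_of_lt hleL hneL) = F3 :=
        consEps_last hxq (pushEps g2) F3
      rw [h1]
    have estep3 : s.ι.app t1 = g ≫ s.ι.app t3 := by
      rw [cocone_rel s hle3 hne3, hval3]
    have estepL : s.ι.app (leafTh legf h0 w' qt) = s.ι.app t3 := by
      rw [cocone_rel s hleL hneL, hvalL]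
      exact Category.id_comp _
    -- put everything together
    rw [estep1, estep3, ← hg', Category.assoc]
    congr 1
    rw [← same_desc s w₀ w' hww' ((le_max_left _ _).trans hβw'), uufac, estepL]
  refine ⟨{ desc := fun s => uu s w₀, fac := ?_, uniq := ?_ }⟩
  · intro s t
    exact facmain s t
  · intro s v hv
    refine (hcolim w₀).hom_ext (fun q => ?_)
    show legf w₀ q ≫ v = legf w₀ q ≫ uu s w₀
    rw [uufac]
    exact hv (leafTh legf h0 w₀ q)

end IsCol

end Threads



variable (lam : Cardinal.{v})

/-- Rank type for the threads. -/
noncomputable abbrev WT : Type v := (Cardinal.ord lam).ToType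

variable {lam}

noncomputable def eIso : Set.Iio lam.ord ≃o WT lam := Ordinal.ToType.mk (o := lam.ord)

lemma mk_WT : #(WT lam) = lam := by
  rw [Cardinal.mk_toType, Cardinal.card_ord]

lemma WT_bound (hreg : lam.IsRegular) :
    ∀ Sw : Set (WT lam), #Sw < lam → ∃ b, ∀ s ∈ Sw, s < b := by
  intro S hS
  have hao : ℵ₀ ≤ lam := hreg.aleph0_le
  have hlim : Order.IsSuccLimit lam.ord := Cardinal.isSuccLimit_ord hao
  set f : S → Ordinal.{v} := fun s => Order.succ ((eIso.symm s.1 : Set.Iio lam.ord) : Ordinal)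
    with hf
  have hflt : ∀ s, f s < lam.ord := fun s => hlim.succ_lt (eIso.symm s.1).2
  have hsup : (⨆ s, f s) < lam.ord := by
    refine Ordinal.iSup_lt_ord ?_ hflt
    rwa [hreg.cof_eq]
  refine ⟨eIso ⟨_, hsup⟩, ?_⟩
  intro s hs
  have h1 : ((eIso.symm s : Set.Iio lam.ord) : Ordinal) < ⨆ s : S, f s := by
    refine lt_of_lt_of_le (Order.lt_succ _) ?_
    exact Ordinal.le_iSup f ⟨s, hs⟩
  have h2 : eIso.symm s < eIso.symm (eIso ⟨_, hsup⟩ : WT lam) := by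
    rw [OrderIso.symm_apply_apply]
    exact h1
  have := eIso.symm.lt_iff_lt.1 h2
  simpa using this

/-- The "cardinal height" of an element of `WT lam`. -/
noncomputable def kw (w : WT lam) : Cardinal.{v} :=
  ((eIso.symm w : Set.Iio lam.ord) : Ordinal).card

lemma kw_lt (w : WT lam) : kw w < lam := Cardinal.lt_ord.1 (eIso.symm w).2

lemma WT_avoid (hreg : lam.IsRegular) :
    ∀ β < lam, ∀ bad : Set (WT lam), #bad < lam → ∃ w, w ∉ bad ∧ β ≤ kw w := by
  intro β hβ bad hbad
  have hao : ℵ₀ ≤ lam := hreg.aleph0_le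
  set B2 : Set (WT lam) := {w | ((eIso.symm w : Set.Iio lam.ord) : Ordinal) < β.ord}
    with hB2
  have hB2card : #B2 ≤ β := by
    have hinj : Function.Injective (fun w : B2 =>
        Ordinal.ToType.mk (o := β.ord) ⟨((eIso.symm w.1 : Set.Iio lam.ord) : Ordinal), w.2⟩) := by
      intro a b hab
      have := (Ordinal.ToType.mk (o := β.ord)).injective hab
      have h1 := congrArg (fun z : ↥(Set.Iio β.ord) => (z : Ordinal)) this
      have h2 : eIso.symm a.1 = eIso.symm b.1 := Subtype.ext h1
      exact Subtype.ext (eIso.symm.injective h2)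
    calc #B2 ≤ #((β.ord).ToType) := Cardinal.mk_le_of_injective hinj
      _ = β := by rw [Cardinal.mk_toType, Cardinal.card_ord]
  have hunion : #(bad ∪ B2 : Set (WT lam)) < lam :=
    lt_of_le_of_lt (mk_union_le _ _) (add_lt_of_lt hao hbad (lt_of_le_of_lt hB2card hβ))
  have hne : ∃ w, w ∉ bad ∪ B2 := by
    by_contra h
    push_neg at h
    have : (Set.univ : Set (WT lam)) ⊆ bad ∪ B2 := fun w _ => h w
    have hle := Cardinal.mk_le_mk_of_subset this
    rw [Cardinal.mk_univ, mk_WT] at hle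
    exact absurd (lt_of_le_of_lt hle hunion) (lt_irrefl lam)
  obtain ⟨w, hw⟩ := hne
  refine ⟨w, fun h => hw (Or.inl h), ?_⟩
  have hnotB2 : ¬ ((eIso.symm w : Set.Iio lam.ord) : Ordinal) < β.ord :=
    fun h => hw (Or.inr h)
  have : β.ord ≤ ((eIso.symm w : Set.Iio lam.ord) : Ordinal) := not_lt.1 hnotB2
  calc β = β.ord.card := (Cardinal.card_ord β).symm
    _ ≤ kw w := Ordinal.card_le_card this


section Main

variable {K : Type u} [Category.{v} K]

theorem part1 (lam : Cardinal.{v}) (hreg : lam.IsRegular)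
    (hlim : Order.IsSuccLimit lam)
    (hacc : ∀ κ < lam, ∃ μ : Cardinal.{v},
      κ ≤ μ ∧ μ < lam ∧ μ.IsRegular ∧ IsAccCat μ (Order.succ μ) K) :
    ¬ ∃ M : K, HasPresRank lam M := by
  rintro ⟨M, hrank⟩
  classical
  have hao : ℵ₀ ≤ lam := hreg.aleph0_le
  have hsucc : ∀ c < lam, Order.succ c < lam := fun c hc => hlim.succ_lt hc
  -- choose accessibility levels indexed by `WT lam`
  have hacc' : ∀ w : WT lam, ∃ μ : Cardinal.{v},
      kw w ≤ μ ∧ μ < lam ∧ μ.IsRegular ∧ IsAccCat μ (Order.succ μ) K :=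
    fun w => hacc (kw w) (kw_lt w)
  choose μf hκμ hμlt hμreg hAcc using hacc'
  have hdecomp : ∀ w : WT lam, ∃ (J : Type v) (_ : Preorder J) (D : J ⥤ K) (c : Cocone D),
      IsCardDirected (μf w) J ∧ (∀ j, IsLtPresentableObj (Order.succ (μf w)) (D.obj j)) ∧
      Nonempty (IsColimit c) ∧ c.pt = M := fun w => (hAcc w).2.2 M
  choose Jf preJ Df cf hdirJ hpieces hNcolim hpt using hdecomp
  letI : ∀ w : WT lam, Preorder (Jf w) := preJ
  -- the legs of the colimit cocones, normalized to have apex `M`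
  set legf : ∀ (w : WT lam) (q : Jf w), (Df w).obj q ⟶ M :=
    fun w q => (cf w).ι.app q ≫ eqToHom (hpt w) with hlegf
  have hleg : ∀ (w : WT lam) ⦃q q' : Jf w⦄ (h : q ⟶ q'),
      (Df w).map h ≫ legf w q' = legf w q := by
    intro w q q' h
    rw [hlegf]
    dsimp only
    rw [← Category.assoc, Cocone.w (cf w) h]
  have hcolimM : ∀ w, IsColimit (MCocone legf hleg w) := by
    intro w
    refine IsColimit.ofIsoColimit (hNcolim w).some (Cocones.ext (eqToIso (hpt w)) ?_)
    intro q
    rfl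
  -- presentability data of the pieces
  have hpres : ∀ (w : WT lam) (q : Jf w), ∃ θ : Cardinal.{v}, θ.IsRegular ∧ θ ≤ μf w ∧
      IsPresentableObj θ ((Df w).obj q) := by
    intro w q
    obtain ⟨θ, hθreg, hθlt, hθpres⟩ := hpieces w q
    refine ⟨θ, hθreg, ?_, hθpres⟩
    have hmax : max (Order.succ (μf w)) (Cardinal.aleph 1) = Order.succ (μf w) := by
      refine max_eq_left ?_
      rw [← Cardinal.succ_aleph0]
      exact Order.succ_le_succ (hμreg w).aleph0_le
    rw [hmax] at hθlt
    exact Order.lt_succ_iff.1 hθlt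
  have havoid : ∀ β < lam, ∀ bad : Set (WT lam), #bad < lam →
      ∃ w, w ∉ bad ∧ β ≤ μf w := by
    intro β hβ bad hbad
    obtain ⟨w, hw, hβw⟩ := WT_avoid hreg β hβ bad hbad
    exact ⟨w, hw, hβw.trans (hκμ w)⟩
  have hWbound := WT_bound (lam := lam) hreg
  -- the thread preorder is `lam`-directed and its canonical cocone is a colimit
  have hdirTh : IsCardDirected lam (Th M Df lam) :=
    th_directed (legf := legf) hreg hsucc hleg hcolimM μf hμreg hμlt hdirJ hpres
      havoid hWbound
  obtain ⟨hcl⟩ := thCocone_isColimit (legf := legf) hreg hleg hcolimM μf hμlt hdirJ hpres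
    havoid hWbound
  -- apply `lam`-presentability of `M`
  haveI := (hrank.2.1 (Th M Df lam) inferInstance hdirTh).some
  have hmap := isColimitOfPreserves (coyoneda.obj (Opposite.op M)) hcl
  obtain ⟨t, y, hy⟩ := Types.jointly_surjective _ hmap (𝟙 M)
  have hy' : y ≫ t.z.m = 𝟙 M := hy
  obtain ⟨θ, hθreg, hθle, hθpres⟩ := hpres t.z.w t.z.q
  have hMθ : IsPresentableObj θ M := presentable_of_retract hθreg y t.z.m hy' hθpres
  have hle := hrank.2.2 θ hθreg hMθ
  exact absurd (lt_of_le_of_lt hθle (hμlt t.z.w)) (not_lt.2 hle)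

end Main
end Stmt13Aux

/-- (1) If `λ` is weakly inaccessible and `K` is `μ`-accessible for unboundedly many regular
`μ < λ`, then `K` has no object of presentability rank `λ`. (2) In particular, in a well
`μ₀`-accessible category, the presentability rank of any object that is not `μ₀`-presentable
is a successor cardinal. -/
theorem stmt13 {K : Type u} [Category.{v} K] :
    (∀ lam : Cardinal.{v}, lam.IsRegular → Order.IsSuccLimit lam → ℵ₀ < lam →
      (∀ κ < lam, ∃ μ : Cardinal.{v},
        κ ≤ μ ∧ μ < lam ∧ μ.IsRegular ∧ IsAccCat μ (Order.succ μ) K) →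
      ¬ ∃ M : K, HasPresRank lam M) ∧
    (∀ μ₀ : Cardinal.{v}, μ₀.IsRegular →
      (∀ θ : Cardinal.{v}, θ.IsRegular → μ₀ ≤ θ → IsAccCat θ (Order.succ θ) K) →
      ∀ (M : K) (lam : Cardinal.{v}), HasPresRank lam M → ¬ IsPresentableObj μ₀ M →
        ∃ κ : Cardinal.{v}, lam = Order.succ κ) := by
  constructor
  · intro lam hreg hlim _ hacc
    exact Stmt13Aux.part1 lam hreg hlim hacc
  · intro μ₀ hμ₀ hWell M lam hrank hnot
    by_contra hns
    push_neg at hns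
    have hreg : lam.IsRegular := hrank.1
    have hμ₀lt : μ₀ < lam := by
      by_contra h
      push_neg at h
      exact hnot (Stmt13Aux.isPresentableObj_mono h hrank.2.1)
    have haleph : ℵ₀ < lam := lt_of_le_of_lt hμ₀.aleph0_le hμ₀lt
    have hlim : Order.IsSuccLimit lam := by
      constructor
      · intro hmin
        have h0 : (0 : Cardinal.{v}) < lam := aleph0_pos.trans_le hreg.aleph0_le
        exact absurd (hmin (zero_le : (0 : Cardinal.{v}) ≤ lam)) (not_le.2 h0)
      · intro b hb
        exact hns b hb.succ_eq.symm
    refine Stmt13Aux.part1 lam hreg hlim ?_ ⟨M, hrank⟩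
    intro κ hκ
    refine ⟨Order.succ (max κ μ₀), ?_, ?_, ?_, ?_⟩
    · exact (le_max_left _ _).trans (Order.le_succ _)
    · exact hlim.succ_lt (max_lt hκ hμ₀lt)
    · exact isRegular_succ ((le_max_right _ _).trans' hμ₀.aleph0_le)
    · exact hWell _ (isRegular_succ ((le_max_right _ _).trans' hμ₀.aleph0_le))
        ((le_max_right _ _).trans (Order.le_succ _))
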